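/- Let E_1, ..., E_q be i.i.d. standard exponential random variables, 1 ≤ p < q, and suppose P(E_1 ≤ x) ~ x as x ↓ 0 (which holds with c = α = 1). Then there exists a constant C > 0 such that for all 0 < 2y < x < 1/2: P(E_1 ⋯ E_p ≤ x, E_1 ⋯ E_q ≤ y) ≤ C · y · (ln(1/y))^{p-1} · (ln(x/y))^{q-p}. -/

import Mathlib

open MeasureTheory Filter ProbabilityTheory

section Stmt11AuxSec
open Finset
set_option maxHeartbeats 1000000
open MeasureTheory Filter ProbabilityTheory Finset

set_option linter.unusedSectionVars false
namespace Stmt11Aux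

variable {Ω : Type*} [MeasurableSpace Ω] {P : Measure Ω} [IsProbabilityMeasure P]
variable {Eseq : ℕ → Ω → ℝ}

lemma meas_prod (hmeas : ∀ i, Measurable (Eseq i)) (s : Finset ℕ) :
    Measurable (fun ω => ∏ i ∈ s, Eseq i ω) :=
  Finset.measurable_prod s (fun i _ => hmeas i)

lemma measSet (hmeas : ∀ i, Measurable (Eseq i)) (s : Finset ℕ) (c : ℝ) :
    MeasurableSet {ω | (∏ i ∈ s, Eseq i ω) ≤ c} :=
  measurableSet_le (meas_prod hmeas s) measurable_const

lemma indep_prods (hmeas : ∀ i, Measurable (Eseq i))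
    (hindep : iIndepFun Eseq P) {S T : Finset ℕ} (hST : Disjoint S T) :
    IndepFun (fun ω => ∏ i ∈ S, Eseq i ω) (fun ω => ∏ i ∈ T, Eseq i ω) P := by
  have h := hindep.indepFun_finset S T hST hmeas
  have hφ : Measurable (fun g : S → ℝ => ∏ i, g i) :=
    Finset.measurable_prod Finset.univ (fun i _ => measurable_pi_apply i)
  have hψ : Measurable (fun g : T → ℝ => ∏ i, g i) :=
    Finset.measurable_prod Finset.univ (fun i _ => measurable_pi_apply i)
  have h2 := h.comp hφ hψ
  convert h2 using 2 <;> exact (Finset.prod_attach _ _).symm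

lemma indep_inter {X Y : Ω → ℝ} (h : IndepFun X Y P) (a b : ℝ) :
    P ({ω | X ω ≤ a} ∩ {ω | Y ω ≤ b}) = P {ω | X ω ≤ a} * P {ω | Y ω ≤ b} := by
  have := h.measure_inter_preimage_eq_mul (Set.Iic a) (Set.Iic b)
    measurableSet_Iic measurableSet_Iic
  simpa [Set.preimage, Set.Iic] using this

lemma toReal_prob_le_one (A : Set Ω) : (P A).toReal ≤ 1 := by
  have := ENNReal.toReal_mono (by simp) (prob_le_one (μ := P) (s := A))
  simpa using this

lemma toReal_mono' {A B : Set Ω} (h : A ⊆ B) : (P A).toReal ≤ (P B).toReal :=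
  ENNReal.toReal_mono (measure_ne_top P B) (measure_mono h)

lemma exp_cdf_le (hexp : ∀ i, ∀ x : ℝ, 0 ≤ x →
      P {ω | Eseq i ω ≤ x} = ENNReal.ofReal (1 - Real.exp (-x)))
    (i : ℕ) {c : ℝ} (hc : 0 ≤ c) : (P {ω | Eseq i ω ≤ c}).toReal ≤ c := by
  rw [hexp i c hc, ENNReal.toReal_ofReal (by
    have := Real.exp_le_one_iff.mpr (neg_nonpos.mpr hc); linarith)]
  have := Real.add_one_le_exp (-c)
  linarith

lemma toReal_union_le (X Y : Set Ω) :
    (P (X ∪ Y)).toReal ≤ (P X).toReal + (P Y).toReal := by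
  have h := measure_union_le (μ := P) X Y
  have h2 := ENNReal.toReal_mono
    (ENNReal.add_ne_top.mpr ⟨measure_ne_top P X, measure_ne_top P Y⟩) h
  rwa [ENNReal.toReal_add (measure_ne_top P X) (measure_ne_top P Y)] at h2

lemma toReal_biUnion_le (s : Finset ℕ) (f : ℕ → Set Ω) :
    (P (⋃ k ∈ s, f k)).toReal ≤ ∑ k ∈ s, (P (f k)).toReal := by
  have h := measure_biUnion_finset_le (μ := P) s f
  have h2 := ENNReal.toReal_mono
    (ENNReal.sum_lt_top.mpr (fun a _ => measure_lt_top P (f a))).ne h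
  rwa [ENNReal.toReal_sum (fun a _ => measure_ne_top P (f a))] at h2

lemma lemA (hmeas : ∀ i, Measurable (Eseq i))
    (hindep : iIndepFun Eseq P)
    (hexp : ∀ i, ∀ x : ℝ, 0 ≤ x →
      P {ω | Eseq i ω ≤ x} = ENNReal.ofReal (1 - Real.exp (-x)))
    (n : ℕ) (hn : 1 ≤ n) : ∀ (a : ℕ) (t : ℝ), 0 < t → t ≤ 2 →
      (P {ω | (∏ i ∈ Finset.Ico a (a+n), Eseq i ω) ≤ t}).toReal ≤
        7^n * t * (1 + Real.log (1/t))^(n-1) := by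
  induction n, hn using Nat.le_induction with
  | base =>
    intro a t ht ht2
    have h1 : Finset.Ico a (a+1) = {a} := by
      rw [Nat.Ico_succ_singleton]
    rw [h1]
    simp only [Finset.prod_singleton, pow_one, Nat.sub_self, pow_zero, mul_one]
    calc (P {ω | Eseq a ω ≤ t}).toReal ≤ t := exp_cdf_le hexp a ht.le
    _ ≤ 7 * t := by linarith
  | succ n hn IH =>
    intro a t ht ht2
    simp only [Nat.add_sub_cancel]
    set L : ℝ := 1 + Real.log (1/t) with hLdef
    have hsplit : ∀ ω : Ω, (∏ i ∈ Finset.Ico a (a+(n+1)), Eseq i ω)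
        = (∏ i ∈ Finset.Ico a (a+n), Eseq i ω) * Eseq (a+n) ω := by
      intro ω
      rw [show a+(n+1) = (a+n)+1 from rfl, Finset.prod_Ico_succ_top (Nat.le_add_right a n)]
    by_cases hhalf : t ≤ 1/2
    case neg =>
      push_neg at hhalf
      have hlog2 : Real.log 2 < 0.7 := lt_trans Real.log_two_lt_d9 (by norm_num)
      have hL3 : (0.3:ℝ) ≤ L := by
        have h1 : Real.log t ≤ Real.log 2 := Real.log_le_log ht ht2
        rw [hLdef, one_div, Real.log_inv]
        linarith
      have h21 : (1:ℝ) ≤ 2.1^n := one_le_pow₀ (by norm_num)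
      have key : (1:ℝ) ≤ 7^(n+1) * t * L^n := by
        have e1 : (7:ℝ)^(n+1) * (1/2) * 0.3^n = 3.5 * 2.1^n := by
          rw [pow_succ, show (2.1:ℝ) = 7*0.3 by norm_num, mul_pow]
          ring
        have e2 : (7:ℝ)^(n+1) * (1/2) * 0.3^n ≤ 7^(n+1) * t * L^n := by
          gcongr <;> linarith
        nlinarith
      calc (P {ω | (∏ i ∈ Finset.Ico a (a+(n+1)), Eseq i ω) ≤ t}).toReal
          ≤ 1 := toReal_prob_le_one _
      _ ≤ _ := key
    case pos =>
      have ht1 : (2:ℝ) ≤ 1/t := by rw [le_div_iff₀ ht]; linarith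
      have hlog2' : (0.5:ℝ) ≤ Real.log 2 := by
        have := Real.log_two_gt_d9; linarith
      have hlogt2 : Real.log 2 ≤ Real.log (1/t) := Real.log_le_log (by norm_num) ht1
      have hL1 : (1:ℝ) ≤ L := by rw [hLdef]; linarith
      have hLpow1 : (1:ℝ) ≤ L^(n-1) := one_le_pow₀ hL1
      have h7 : (1:ℝ) ≤ (7:ℝ)^n := one_le_pow₀ (by norm_num)
      set m := ⌊1/t⌋₊ with hm
      have hm2 : 2 ≤ m := Nat.le_floor (by exact_mod_cast ht1)
      have hlogpos : 0 < Nat.log 2 m := Nat.log_pos (by norm_num) hm2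
      obtain ⟨K, hK⟩ : ∃ K, Nat.log 2 m = K + 1 := ⟨Nat.log 2 m - 1, by omega⟩
      have hm0 : m ≠ 0 := by omega
      have h2K : (2:ℝ)^(K+1) ≤ 1/t := by
        have h1 : (2:ℕ)^(K+1) ≤ m := by rw [← hK]; exact Nat.pow_log_le_self 2 hm0
        calc ((2:ℝ))^(K+1) = ((2^(K+1) : ℕ) : ℝ) := by push_cast; ring
        _ ≤ (m:ℝ) := by exact_mod_cast h1
        _ ≤ 1/t := Nat.floor_le (by positivity)
      have h2K' : 1/t < (2:ℝ)^(K+2) := by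
        have h1 : m < 2^(K+2) := by
          calc m < 2^(Nat.log 2 m + 1) := Nat.lt_pow_succ_log_self (by norm_num) m
          _ = 2^(K+2) := by rw [hK]
        calc 1/t < (m:ℝ)+1 := Nat.lt_floor_add_one _
        _ ≤ ((2^(K+2):ℕ):ℝ) := by exact_mod_cast h1
        _ = (2:ℝ)^(K+2) := by push_cast; ring
      set U : Ω → ℝ := fun ω => ∏ i ∈ Finset.Ico a (a+n), Eseq i ω with hU
      have hindepUE : IndepFun U (Eseq (a+n)) P := by
        have h := hindep.indepFun_finsetProd_of_notMem hmeas
          (s := Finset.Ico a (a+n)) (i := a+n) (by simp)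
        have he : U = ∏ j ∈ Finset.Ico a (a+n), Eseq j := by
          funext ω; rw [Finset.prod_apply]
        rwa [← he] at h
      set B0 : Set Ω := {ω | Eseq (a+n) ω ≤ (1/2:ℝ)^(K+1)} with hB0def
      set B1 : Set Ω := {ω | U ω ≤ t} with hB1def
      set Cs : ℕ → Set Ω :=
        fun k => {ω | U ω ≤ t * 2^(k+1)} ∩ {ω | Eseq (a+n) ω ≤ (1/2:ℝ)^k} with hCsdef
      have hcover : {ω | (∏ i ∈ Finset.Ico a (a+(n+1)), Eseq i ω) ≤ t}
          ⊆ (B0 ∪ B1) ∪ ⋃ k ∈ Finset.range (K+1), Cs k := by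
        intro ω hω
        simp only [Set.mem_setOf_eq] at hω
        rw [hsplit ω] at hω
        by_cases hB0 : Eseq (a+n) ω ≤ (1/2:ℝ)^(K+1)
        · exact Or.inl (Or.inl hB0)
        push_neg at hB0
        have he_pos : 0 < Eseq (a+n) ω := lt_trans (by positivity) hB0
        by_cases he1 : 1 < Eseq (a+n) ω
        · refine Or.inl (Or.inr ?_)
          show U ω ≤ t
          nlinarith
        push_neg at he1
        classical
        set Q : ℕ → Prop := fun k => Eseq (a+n) ω ≤ (1/2:ℝ)^k with hQdef
        have hQ0 : Q 0 := by simpa [hQdef] using he1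
        set k := Nat.findGreatest Q K with hk
        have hQk : Q k := Nat.findGreatest_spec (Nat.zero_le K) hQ0
        have hkK : k ≤ K := Nat.findGreatest_le K
        have hek : (1/2:ℝ)^(k+1) < Eseq (a+n) ω := by
          rcases lt_or_eq_of_le hkK with hlt | heq
          · by_contra hc
            push_neg at hc
            have hng : ¬ Q (k+1) :=
              Nat.findGreatest_is_greatest (n := K) (by omega) (by omega)
            exact hng hc
          · rw [heq]; exact hB0
        refine Or.inr ?_
        have hkK1 : k ∈ Finset.range (K+1) := Finset.mem_range.mpr (by omega)
        refine Set.mem_biUnion hkK1 ?_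
        refine ⟨?_, hQk⟩
        show U ω ≤ t * 2^(k+1)
        have h2 : U ω ≤ t / Eseq (a+n) ω := (le_div_iff₀ he_pos).mpr hω
        have hpow : ((1:ℝ)/2)^(k+1) = ((2:ℝ)^(k+1))⁻¹ := by
          rw [one_div, inv_pow]
        have h3 : t / Eseq (a+n) ω < t * 2^(k+1) := by
          rw [div_lt_iff₀ he_pos]
          rw [hpow] at hek
          have hp2 : (0:ℝ) < (2:ℝ)^(k+1) := by positivity
          have h1lt : (1:ℝ) < 2^(k+1) * Eseq (a+n) ω := by
            have h := mul_lt_mul_of_pos_left hek hp2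
            rwa [mul_inv_cancel₀ (ne_of_gt hp2)] at h
          nlinarith
        linarith
      have hPB0 : (P B0).toReal ≤ 2*t := by
        have h1 := exp_cdf_le hexp (a+n) (c := (1/2:ℝ)^(K+1)) (by positivity)
        have h2 : ((1:ℝ)/2)^(K+1) ≤ 2*t := by
          rw [div_pow, one_pow, div_le_iff₀ (by positivity)]
          have h3 : 1/t < 2^(K+1) * 2 := by
            calc 1/t < (2:ℝ)^(K+2) := h2K'
            _ = 2^(K+1) * 2 := by rw [pow_succ]
          rw [div_lt_iff₀ ht] at h3
          nlinarith
        linarith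
      have hPB1 : (P B1).toReal ≤ 7^n * t * L^(n-1) := IH a t ht (by linarith)
      have hterm : ∀ k ∈ Finset.range (K+1),
          (P (Cs k)).toReal ≤ 2 * 7^n * t * L^(n-1) := by
        intro k hk
        have hkK : k ≤ K := Nat.lt_succ_iff.mp (Finset.mem_range.mp hk)
        have harg_pos : (0:ℝ) < t * 2^(k+1) := by positivity
        have harg_le : t * 2^(k+1) ≤ 1 := by
          have hmono : (2:ℝ)^(k+1) ≤ 2^(K+1) := by
            apply pow_le_pow_right₀ (by norm_num) (by omega)
          have h4 : (2:ℝ)^(K+1) * t ≤ 1 := by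
            rw [le_div_iff₀ ht] at h2K; linarith
          nlinarith
        have hPU := IH a (t * 2^(k+1)) harg_pos (by linarith)
        have hPE := exp_cdf_le hexp (a+n) (c := (1/2:ℝ)^k) (by positivity)
        have hmul : (P (Cs k)).toReal
            = (P {ω | U ω ≤ t*2^(k+1)}).toReal
              * (P {ω | Eseq (a+n) ω ≤ (1/2:ℝ)^k}).toReal := by
          rw [hCsdef]
          rw [indep_inter hindepUE, ENNReal.toReal_mul]
        have hbase0 : (0:ℝ) ≤ 1 + Real.log (1/(t*2^(k+1))) := by
          have h5 : (1:ℝ) ≤ 1/(t*2^(k+1)) := by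
            rw [le_div_iff₀ harg_pos]; linarith
          have := Real.log_nonneg h5
          linarith
        have hLb : (1 + Real.log (1/(t*2^(k+1))))^(n-1) ≤ L^(n-1) := by
          apply pow_le_pow_left₀ hbase0
          · have h6 : 1/(t*2^(k+1)) ≤ 1/t := by
              apply div_le_div_of_nonneg_left (by norm_num) ht
              nlinarith [one_le_pow₀ (show (1:ℝ) ≤ 2 by norm_num) (n:=k+1), ht]
            have := Real.log_le_log (by positivity) h6
            rw [hLdef]; linarith
        have hhalfpow : ((1:ℝ)/2)^k * (2:ℝ)^(k+1) = 2 := by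
          rw [one_div, inv_pow, pow_succ]
          field_simp
        calc (P (Cs k)).toReal
            ≤ (7^n * (t*2^(k+1)) * (1+Real.log (1/(t*2^(k+1))))^(n-1)) * ((1/2:ℝ)^k) := by
              rw [hmul]
              apply mul_le_mul hPU hPE ENNReal.toReal_nonneg
              exact mul_nonneg (by positivity) (pow_nonneg hbase0 _)
        _ ≤ (7^n * (t*2^(k+1)) * L^(n-1)) * ((1/2:ℝ)^k) := by
              gcongr
        _ = 2 * 7^n * t * L^(n-1) := by
              rw [show (7:ℝ)^n * (t*2^(k+1)) * L^(n-1) * ((1/2:ℝ)^k)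
                  = 7^n * t * L^(n-1) * ((1/2:ℝ)^k * 2^(k+1)) by ring, hhalfpow]
              ring
      have hK1 : ((K:ℝ)+1) ≤ 2 * Real.log (1/t) := by
        have h1 := Real.log_le_log (by positivity) h2K
        rw [Real.log_pow] at h1
        push_cast at h1
        nlinarith
      have hchain : (P {ω | (∏ i ∈ Finset.Ico a (a+(n+1)), Eseq i ω) ≤ t}).toReal
          ≤ 2*t + 7^n * t * L^(n-1) + ((K:ℝ)+1) * (2 * 7^n * t * L^(n-1)) := by
        calc (P {ω | (∏ i ∈ Finset.Ico a (a+(n+1)), Eseq i ω) ≤ t}).toReal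
            ≤ (P ((B0 ∪ B1) ∪ ⋃ k ∈ Finset.range (K+1), Cs k)).toReal :=
              toReal_mono' hcover
        _ ≤ (P (B0 ∪ B1)).toReal + (P (⋃ k ∈ Finset.range (K+1), Cs k)).toReal :=
              toReal_union_le _ _
        _ ≤ ((P B0).toReal + (P B1).toReal)
              + ∑ k ∈ Finset.range (K+1), (P (Cs k)).toReal := by
              gcongr
              · exact toReal_union_le _ _
              · exact toReal_biUnion_le _ _
        _ ≤ (2*t + 7^n * t * L^(n-1)) + ((K:ℝ)+1) * (2 * 7^n * t * L^(n-1)) := by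
              gcongr
              calc ∑ k ∈ Finset.range (K+1), (P (Cs k)).toReal
                  ≤ ∑ _k ∈ Finset.range (K+1), (2 * 7^n * t * L^(n-1)) :=
                    Finset.sum_le_sum hterm
              _ = ((K:ℝ)+1) * (2 * 7^n * t * L^(n-1)) := by
                    rw [Finset.sum_const, Finset.card_range, nsmul_eq_mul]
                    push_cast; ring
        _ = _ := by ring
      have hLn : L^n = L^(n-1) * L := by
        conv_lhs => rw [show n = (n-1)+1 by omega]
        rw [pow_succ]
      have hX0 : (0:ℝ) ≤ 7^n * t * L^(n-1) := by positivity
      have htX : t ≤ 7^n * t * L^(n-1) := by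
        have h1 : 1*t ≤ 7^n*t := mul_le_mul_of_nonneg_right h7 ht.le
        have h2 : ((7:ℝ)^n*t)*1 ≤ (7^n*t)*L^(n-1) :=
          mul_le_mul_of_nonneg_left hLpow1 (by positivity)
        linarith
      have hlogL : Real.log (1/t) ≤ L := by rw [hLdef]; linarith
      have hlogt0 : 0 ≤ Real.log (1/t) := by linarith
      clear_value L
      have hgoal : 2*t + 7^n * t * L^(n-1) + ((K:ℝ)+1) * (2 * 7^n * t * L^(n-1))
          ≤ 7^(n+1) * t * L^n := by
        have hrhs : (7:ℝ)^(n+1) * t * L^n = 7 * (L * (7^n * t * L^(n-1))) := by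
          rw [hLn, pow_succ]; ring
        have hc : ((K:ℝ)+1) * (2 * 7^n * t * L^(n-1))
            ≤ (2*Real.log (1/t)) * (2 * 7^n * t * L^(n-1)) := by
          apply mul_le_mul_of_nonneg_right hK1 (by positivity)
        have hd : Real.log (1/t) * (7^n * t * L^(n-1)) ≤ L * (7^n * t * L^(n-1)) :=
          mul_le_mul_of_nonneg_right hlogL hX0
        have hb : (7:ℝ)^n * t * L^(n-1) ≤ L * (7^n * t * L^(n-1)) := by
          have h2 : ((7:ℝ)^n*t*L^(n-1))*1 ≤ ((7:ℝ)^n*t*L^(n-1))*L :=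
            mul_le_mul_of_nonneg_left hL1 hX0
          linarith
        rw [hrhs]
        linarith
      linarith

end Stmt11Aux
end Stmt11AuxSec
open Stmt11Aux
set_option maxHeartbeats 1000000

/-- Joint lower-tail bound for products of i.i.d. standard exponentials sharing the first
`p` factors: there is `C > 0` such that for all `0 < 2y < x < 1/2`,
`P(E_1⋯E_p ≤ x, E_1⋯E_q ≤ y) ≤ C y (ln(1/y))^{p-1} (ln(x/y))^{q-p}`. -/
theorem stmt11 {Ω : Type*} [MeasurableSpace Ω] (P : Measure Ω) [IsProbabilityMeasure P]
    (p q : ℕ) (hp : 1 ≤ p) (hpq : p < q)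
    (Eseq : ℕ → Ω → ℝ) (hmeas : ∀ i, Measurable (Eseq i))
    (hindep : iIndepFun Eseq P)
    (hexp : ∀ i, ∀ x : ℝ, 0 ≤ x →
      P {ω | Eseq i ω ≤ x} = ENNReal.ofReal (1 - Real.exp (-x))) :
    ∃ C : ℝ, 0 < C ∧ ∀ x y : ℝ, 0 < y → 2 * y < x → x < 1 / 2 →
      (P {ω | (∏ i ∈ Finset.range p, Eseq i ω) ≤ x ∧
          (∏ i ∈ Finset.range q, Eseq i ω) ≤ y}).toReal ≤
        C * y * Real.log (1 / y) ^ (p - 1) * Real.log (x / y) ^ (q - p) := by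
  classical
  refine ⟨7^p * 2^(p-1) * 2^(q-p) + 2 * 7^q * 2^(p-1) * 6^(q-p), by positivity, ?_⟩
  intro x y hy hxy hx
  have hx0 : 0 < x := by linarith
  have hxy1 : (2:ℝ) < x/y := by rw [lt_div_iff₀ hy]; linarith
  have hlog2' : (0.5:ℝ) ≤ Real.log 2 := by have := Real.log_two_gt_d9; linarith
  have hlog2'' : Real.log 2 ≤ 0.7 := by have := Real.log_two_lt_d9; linarith
  have hlogxy : Real.log 2 ≤ Real.log (x/y) := Real.log_le_log (by norm_num) hxy1.le
  have hlogxy0 : 0 < Real.log (x/y) := lt_of_lt_of_le (by linarith) hlogxy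
  have hlogy1 : (1:ℝ) ≤ Real.log (1/y) := by
    have h4 : Real.log 4 ≤ Real.log (1/y) := by
      apply Real.log_le_log (by norm_num)
      rw [le_div_iff₀ hy]; linarith
    have h42 : Real.log 4 = 2 * Real.log 2 := by
      rw [show (4:ℝ) = 2^2 by norm_num, Real.log_pow]; push_cast; ring
    linarith
  set Ly : ℝ := 1 + Real.log (1/y) with hLydef
  have hLy2 : Ly ≤ 2 * Real.log (1/y) := by rw [hLydef]; linarith
  have hLy0 : (0:ℝ) ≤ Ly := by rw [hLydef]; linarith
  set mc := ⌈x/y⌉₊ with hmc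
  have h2mc : 2 ≤ mc := by
    have h1 : (1:ℕ) < mc := by
      rw [hmc, Nat.lt_ceil]; push_cast; linarith
    omega
  set K := Nat.log 2 mc with hK
  have hxy2K : x/y ≤ (2:ℝ)^(K+1) := by
    calc x/y ≤ (mc:ℝ) := Nat.le_ceil _
    _ ≤ ((2^(K+1):ℕ):ℝ) := by
        exact_mod_cast (Nat.lt_pow_succ_log_self (by norm_num) mc).le
    _ = (2:ℝ)^(K+1) := by push_cast; ring
  have hmclt : (mc:ℝ) < x/y + 1 := Nat.ceil_lt_add_one (by positivity)
  have h2Kxy : (2:ℝ)^K ≤ (x/y)^2 := by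
    have h1 : (2:ℕ)^K ≤ mc := Nat.pow_log_le_self 2 (by omega)
    have h3 : x/y + 1 ≤ (x/y)^2 := by nlinarith
    calc (2:ℝ)^K = ((2^K:ℕ):ℝ) := by push_cast; ring
    _ ≤ (mc:ℝ) := by exact_mod_cast h1
    _ ≤ (x/y)^2 := by linarith
  have hK6 : ((K:ℝ)+1) ≤ 6 * Real.log (x/y) := by
    have h1 : (K:ℝ) * Real.log 2 ≤ 2 * Real.log (x/y) := by
      have h2 := Real.log_le_log (by positivity) h2Kxy
      rw [Real.log_pow, Real.log_pow] at h2; push_cast at h2; linarith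
    nlinarith
  have hy2K : y * 2^(K+1) ≤ 3 * x := by
    have h1 : (2:ℝ)^(K+1) ≤ 2*(x/y+1) := by
      have h2 : (2:ℝ)^K ≤ (mc:ℝ) := by
        have := Nat.pow_log_le_self 2 (show mc ≠ 0 by omega)
        calc (2:ℝ)^K = ((2^K:ℕ):ℝ) := by push_cast; ring
        _ ≤ (mc:ℝ) := by exact_mod_cast this
      rw [pow_succ]
      nlinarith
    have h3 : y * (2*(x/y+1)) = 2*x + 2*y := by field_simp
    nlinarith
  have hy2K2 : y * 2^(K+1) ≤ 2 := by linarith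
  set U : Ω → ℝ := fun ω => ∏ i ∈ Finset.range p, Eseq i ω with hU
  set V : Ω → ℝ := fun ω => ∏ i ∈ Finset.Ico p q, Eseq i ω with hV
  have hUV : ∀ ω, (∏ i ∈ Finset.range q, Eseq i ω) = U ω * V ω := by
    intro ω
    rw [hU, hV]
    dsimp only
    rw [Finset.range_eq_Ico, ← Finset.prod_Ico_consecutive _ (Nat.zero_le p) hpq.le,
      ← Finset.range_eq_Ico]
  have hindepUV : IndepFun U V P := by
    apply indep_prods hmeas hindep
    rw [Finset.range_eq_Ico]
    exact Finset.Ico_disjoint_Ico_consecutive 0 p q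
  have hlemU : ∀ s : ℝ, 0 < s → s ≤ 2 → (P {ω | U ω ≤ s}).toReal ≤
      7^p * s * (1 + Real.log (1/s))^(p-1) := by
    intro s hs hs2
    have h := lemA hmeas hindep hexp p hp 0 s hs hs2
    rw [show (0:ℕ) + p = p from by omega] at h
    rw [hU]
    rw [← Finset.range_eq_Ico] at h
    exact h
  have hlemV : ∀ s : ℝ, 0 < s → s ≤ 2 → (P {ω | V ω ≤ s}).toReal ≤
      7^(q-p) * s * (1 + Real.log (1/s))^(q-p-1) := by
    intro s hs hs2
    have h := lemA hmeas hindep hexp (q-p) (by omega) p s hs hs2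
    rw [show p + (q-p) = q from by omega] at h
    exact h
  set B1 : Set Ω := {ω | U ω ≤ y} with hB1def
  set Cs : ℕ → Set Ω :=
    fun k => {ω | U ω ≤ y * 2^(k+1)} ∩ {ω | V ω ≤ (1/2:ℝ)^k} with hCsdef
  have hcover : {ω | (∏ i ∈ Finset.range p, Eseq i ω) ≤ x ∧
        (∏ i ∈ Finset.range q, Eseq i ω) ≤ y}
      ⊆ B1 ∪ ⋃ k ∈ Finset.range (K+1), Cs k := by
    intro ω hω
    obtain ⟨h1, h2⟩ := hω
    rw [hUV ω] at h2
    by_cases hyU : U ω ≤ y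
    · exact Or.inl hyU
    push_neg at hyU
    have hUpos : 0 < U ω := lt_trans hy hyU
    set Q : ℕ → Prop := fun k => y * 2^k < U ω with hQdef
    have hQ0 : Q 0 := by simpa [hQdef] using hyU
    set k := Nat.findGreatest Q K with hk
    have hQk : Q k := Nat.findGreatest_spec (Nat.zero_le K) hQ0
    have hkK : k ≤ K := Nat.findGreatest_le K
    have hupper : U ω ≤ y * 2^(k+1) := by
      rcases lt_or_eq_of_le hkK with hlt | heq
      · have hng : ¬ Q (k+1) :=
          Nat.findGreatest_is_greatest (n := K) (by omega) (by omega)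
        simpa [hQdef] using hng
      · rw [heq]
        calc U ω ≤ x := h1
        _ ≤ y * 2^(K+1) := by
            rw [div_le_iff₀ hy] at hxy2K
            linarith
    have hy2kpos : (0:ℝ) < y * 2^k := by positivity
    have hVb : V ω ≤ (1/2:ℝ)^k := by
      have hV1 : V ω ≤ y / U ω := by
        rw [le_div_iff₀ hUpos]
        linarith [h2]
      have hV2 : y / U ω < y / (y * 2^k) :=
        div_lt_div_of_pos_left hy hy2kpos hQk
      have hV3 : y / (y * 2^k) = (1/2:ℝ)^k := by
        rw [one_div, inv_pow]
        field_simp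
      linarith [hV2, hV3.symm.le]
    refine Or.inr ?_
    have hkmem : k ∈ Finset.range (K+1) := Finset.mem_range.mpr (by omega)
    exact Set.mem_biUnion hkmem ⟨hupper, hVb⟩
  have hPB1 : (P B1).toReal ≤ 7^p * y * Ly^(p-1) := hlemU y hy (by linarith)
  have hterm : ∀ k ∈ Finset.range (K+1),
      (P (Cs k)).toReal ≤ 2 * 7^q * y * Ly^(p-1) * ((K:ℝ)+1)^(q-p-1) := by
    intro k hkr
    have hkK : k ≤ K := Nat.lt_succ_iff.mp (Finset.mem_range.mp hkr)
    have hargU_pos : (0:ℝ) < y * 2^(k+1) := by positivity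
    have hargU_le : y * 2^(k+1) ≤ 2 := by
      have hmono : (2:ℝ)^(k+1) ≤ 2^(K+1) :=
        pow_le_pow_right₀ (by norm_num) (by omega)
      nlinarith
    have hPU := hlemU (y * 2^(k+1)) hargU_pos hargU_le
    have hPV := hlemV ((1/2:ℝ)^k) (by positivity) (by
      calc ((1:ℝ)/2)^k ≤ 1 := pow_le_one₀ (by norm_num) (by norm_num)
      _ ≤ 2 := by norm_num)
    have hmul : (P (Cs k)).toReal
        = (P {ω | U ω ≤ y*2^(k+1)}).toReal * (P {ω | V ω ≤ (1/2:ℝ)^k}).toReal := by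
      rw [hCsdef]
      rw [indep_inter hindepUV, ENNReal.toReal_mul]
    have hbase0 : (0:ℝ) ≤ 1 + Real.log (1/(y*2^(k+1))) := by
      have h5 : (1:ℝ)/2 ≤ 1/(y*2^(k+1)) := by
        rw [div_le_div_iff₀ (by norm_num) hargU_pos]
        linarith
      have h6 := Real.log_le_log (by norm_num) h5
      rw [show (1:ℝ)/2 = 2⁻¹ from by norm_num, Real.log_inv] at h6
      linarith
    have hLbU : (1 + Real.log (1/(y*2^(k+1))))^(p-1) ≤ Ly^(p-1) := by
      apply pow_le_pow_left₀ hbase0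
      have h6 : 1/(y*2^(k+1)) ≤ 1/y := by
        apply div_le_div_of_nonneg_left (by norm_num) hy
        nlinarith [one_le_pow₀ (show (1:ℝ) ≤ 2 by norm_num) (n:=k+1)]
      have := Real.log_le_log (by positivity) h6
      rw [hLydef]; linarith
    have hLbV : (1 + Real.log (1/((1/2:ℝ)^k)))^(q-p-1) ≤ ((K:ℝ)+1)^(q-p-1) := by
      have hrw : (1:ℝ)/((1/2:ℝ)^k) = 2^k := by
        rw [one_div, one_div, inv_pow, inv_inv]
      rw [hrw, Real.log_pow]
      apply pow_le_pow_left₀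
      · push_cast
        nlinarith [Real.log_nonneg (show (1:ℝ) ≤ 2 by norm_num),
          Nat.cast_nonneg (α := ℝ) k]
      · push_cast
        have : (k:ℝ) ≤ K := by exact_mod_cast hkK
        nlinarith [Nat.cast_nonneg (α := ℝ) k]
    have hbaseV0 : (0:ℝ) ≤ 1 + Real.log (1/((1/2:ℝ)^k)) := by
      have hrw : (1:ℝ)/((1/2:ℝ)^k) = 2^k := by
        rw [one_div, one_div, inv_pow, inv_inv]
      rw [hrw, Real.log_pow]
      nlinarith [Nat.cast_nonneg (α := ℝ) k]
    have hhalfpow : ((1:ℝ)/2)^k * (2:ℝ)^(k+1) = 2 := by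
      rw [one_div, inv_pow, pow_succ]
      field_simp
    calc (P (Cs k)).toReal
        = (P {ω | U ω ≤ y*2^(k+1)}).toReal * (P {ω | V ω ≤ (1/2:ℝ)^k}).toReal := hmul
    _ ≤ (7^p * (y*2^(k+1)) * (1+Real.log (1/(y*2^(k+1))))^(p-1))
          * (7^(q-p) * ((1/2:ℝ)^k) * (1+Real.log (1/((1/2:ℝ)^k)))^(q-p-1)) := by
        apply mul_le_mul hPU hPV ENNReal.toReal_nonneg
        exact mul_nonneg (by positivity) (pow_nonneg hbase0 _)
    _ ≤ (7^p * (y*2^(k+1)) * Ly^(p-1))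
          * (7^(q-p) * ((1/2:ℝ)^k) * ((K:ℝ)+1)^(q-p-1)) := by
        apply mul_le_mul
        · gcongr
        · gcongr
        · exact mul_nonneg (by positivity) (pow_nonneg hbaseV0 _)
        · exact mul_nonneg (by positivity) (pow_nonneg hLy0 _)
    _ = 7^p * 7^(q-p) * y * Ly^(p-1) * ((K:ℝ)+1)^(q-p-1) * (((1/2:ℝ)^k) * 2^(k+1)) := by
        ring
    _ = 2 * 7^q * y * Ly^(p-1) * ((K:ℝ)+1)^(q-p-1) := by
        rw [hhalfpow, ← pow_add, show p + (q-p) = q from by omega]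
        ring
  have hchain : (P {ω | (∏ i ∈ Finset.range p, Eseq i ω) ≤ x ∧
        (∏ i ∈ Finset.range q, Eseq i ω) ≤ y}).toReal
      ≤ 7^p * y * Ly^(p-1)
        + ((K:ℝ)+1) * (2 * 7^q * y * Ly^(p-1) * ((K:ℝ)+1)^(q-p-1)) := by
    calc (P {ω | (∏ i ∈ Finset.range p, Eseq i ω) ≤ x ∧
          (∏ i ∈ Finset.range q, Eseq i ω) ≤ y}).toReal
        ≤ (P (B1 ∪ ⋃ k ∈ Finset.range (K+1), Cs k)).toReal := toReal_mono' hcover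
    _ ≤ (P B1).toReal + (P (⋃ k ∈ Finset.range (K+1), Cs k)).toReal :=
        toReal_union_le _ _
    _ ≤ (P B1).toReal + ∑ k ∈ Finset.range (K+1), (P (Cs k)).toReal := by
        gcongr
        exact toReal_biUnion_le _ _
    _ ≤ 7^p * y * Ly^(p-1)
        + ((K:ℝ)+1) * (2 * 7^q * y * Ly^(p-1) * ((K:ℝ)+1)^(q-p-1)) := by
        gcongr
        calc ∑ k ∈ Finset.range (K+1), (P (Cs k)).toReal
            ≤ ∑ _k ∈ Finset.range (K+1), (2 * 7^q * y * Ly^(p-1) * ((K:ℝ)+1)^(q-p-1)) :=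
              Finset.sum_le_sum hterm
        _ = ((K:ℝ)+1) * (2 * 7^q * y * Ly^(p-1) * ((K:ℝ)+1)^(q-p-1)) := by
              rw [Finset.sum_const, Finset.card_range, nsmul_eq_mul]
              push_cast; ring
  -- final arithmetic
  obtain ⟨d, hd⟩ : ∃ d, q - p = d + 1 := ⟨q-p-1, by omega⟩
  have hd1 : q - p - 1 = d := by omega
  have hKpow : ((K:ℝ)+1) * ((K:ℝ)+1)^(q-p-1) = ((K:ℝ)+1)^(q-p) := by
    rw [hd1, hd, pow_succ]
    ring
  have hA1 : (0:ℝ) ≤ Real.log (1/y) := by linarith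
  have hKpow6 : ((K:ℝ)+1)^(q-p) ≤ 6^(q-p) * Real.log (x/y)^(q-p) := by
    rw [← mul_pow]
    exact pow_le_pow_left₀ (by positivity) hK6 _
  have hLyA : Ly^(p-1) ≤ 2^(p-1) * Real.log (1/y)^(p-1) := by
    rw [← mul_pow]
    exact pow_le_pow_left₀ hLy0 hLy2 _
  have hone : (1:ℝ) ≤ 2^(q-p) * Real.log (x/y)^(q-p) := by
    rw [← mul_pow]
    apply one_le_pow₀
    linarith
  have hB1fin : 7^p * y * Ly^(p-1)
      ≤ 7^p * 2^(p-1) * 2^(q-p) * (y * Real.log (1/y)^(p-1) * Real.log (x/y)^(q-p)) := by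
    calc 7^p * y * Ly^(p-1) ≤ 7^p * y * (2^(p-1) * Real.log (1/y)^(p-1)) := by
          gcongr
    _ = (7^p * 2^(p-1) * (y * Real.log (1/y)^(p-1))) * 1 := by ring
    _ ≤ (7^p * 2^(p-1) * (y * Real.log (1/y)^(p-1)))
          * (2^(q-p) * Real.log (x/y)^(q-p)) := by
        apply mul_le_mul_of_nonneg_left hone
        positivity
    _ = 7^p * 2^(p-1) * 2^(q-p) * (y * Real.log (1/y)^(p-1) * Real.log (x/y)^(q-p)) := by
        ring
  have hSumfin : ((K:ℝ)+1) * (2 * 7^q * y * Ly^(p-1) * ((K:ℝ)+1)^(q-p-1))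
      ≤ 2 * 7^q * 2^(p-1) * 6^(q-p)
          * (y * Real.log (1/y)^(p-1) * Real.log (x/y)^(q-p)) := by
    have h1 : ((K:ℝ)+1) * (2 * 7^q * y * Ly^(p-1) * ((K:ℝ)+1)^(q-p-1))
        = 2 * 7^q * y * Ly^(p-1) * ((K:ℝ)+1)^(q-p) := by
      rw [← hKpow]; ring
    rw [h1]
    calc 2 * 7^q * y * Ly^(p-1) * ((K:ℝ)+1)^(q-p)
        ≤ 2 * 7^q * y * (2^(p-1) * Real.log (1/y)^(p-1))
            * (6^(q-p) * Real.log (x/y)^(q-p)) := by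
          apply mul_le_mul
          · gcongr
          · exact hKpow6
          · positivity
          · positivity
    _ = 2 * 7^q * 2^(p-1) * 6^(q-p)
          * (y * Real.log (1/y)^(p-1) * Real.log (x/y)^(q-p)) := by ring
  calc (P {ω | (∏ i ∈ Finset.range p, Eseq i ω) ≤ x ∧
        (∏ i ∈ Finset.range q, Eseq i ω) ≤ y}).toReal
      ≤ 7^p * y * Ly^(p-1)
        + ((K:ℝ)+1) * (2 * 7^q * y * Ly^(p-1) * ((K:ℝ)+1)^(q-p-1)) := hchain
  _ ≤ (7^p * 2^(p-1) * 2^(q-p) + 2 * 7^q * 2^(p-1) * 6^(q-p))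
        * (y * Real.log (1/y)^(p-1) * Real.log (x/y)^(q-p)) := by
      linarith [hB1fin, hSumfin]
  _ = (7^p * 2^(p-1) * 2^(q-p) + 2 * 7^q * 2^(p-1) * 6^(q-p))
        * y * Real.log (1/y)^(p-1) * Real.log (x/y)^(q-p) := by ring
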